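/- Let G be a finite p-group with |G| ≥ p^3 and |G : G'| = p^2, and let H be a maximal subgroup of G with H' = 1 (H abelian). Then Z(G) has order p and G is of maximal class (nilpotency class equal to log_p|G| − 1). -/

import Mathlib

set_option linter.unusedSectionVars false

open Subgroup

open commutatorElement

universe u

section Helpers


variable {p : ℕ} [Fact p.Prime] {G : Type*} [Group G] [Finite G]

lemma coatom_of_index_prime {H : Subgroup G} (hH : H.index = p) : IsCoatom H := by
  have hp := (Fact.out : p.Prime)
  constructor
  · intro h
    rw [h, index_top] at hH
    exact hp.one_lt.ne' hH.symm
  · intro K hK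
    have hdvd : K.index ∣ H.index := index_dvd_of_le hK.le
    rw [hH] at hdvd
    rcases (Nat.Prime.eq_one_or_self_of_dvd hp _ hdvd) with h1 | h2
    · exact index_eq_one.mp h1
    · exfalso
      have hrel := relIndex_mul_index hK.le
      rw [hH, h2] at hrel
      have h3 : H.relIndex K = 1 :=
        Nat.eq_of_mul_eq_mul_right hp.pos (by rw [hrel, one_mul])
      exact hK.not_ge (relIndex_eq_one.mp h3)

lemma normal_of_index_prime (hG : IsPGroup p G) {H : Subgroup G} (hH : H.index = p) :
    H.Normal := by
  haveI := hG.isNilpotent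
  exact NormalizerCondition.normal_of_coatom H normalizerCondition_of_isNilpotent
    (coatom_of_index_prime hH)

/-- a nontrivial normal subgroup of a finite p-group meets the center nontrivially -/
lemma exists_mem_center_of_normal (hG : IsPGroup p G) {N : Subgroup G} [N.Normal]
    (hN : N ≠ ⊥) : ∃ z : G, z ∈ N ∧ z ∈ Subgroup.center G ∧ z ≠ 1 := by
  have hp := (Fact.out : p.Prime)
  have hGN : IsPGroup p N := hG.to_subgroup N
  have hGc : IsPGroup p (ConjAct G) := hG.of_equiv ConjAct.toConjAct
  have hdvd : p ∣ Nat.card N := by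
    haveI : Nontrivial N := (Subgroup.nontrivial_iff_ne_bot N).mpr hN
    obtain ⟨k, hk0, hk⟩ := hGN.nontrivial_iff_card.mp inferInstance
    exact hk ▸ dvd_pow_self p hk0.ne'
  have h1 : (1 : N) ∈ MulAction.fixedPoints (ConjAct G) N := by
    intro g; exact smul_one _
  obtain ⟨b, hb, hb1⟩ := hGc.exists_fixed_point_of_prime_dvd_card_of_fixed_point (α := N) hdvd h1
  refine ⟨(b : G), b.2, ?_, ?_⟩
  · rw [Subgroup.mem_center_iff]
    intro g
    have h3 : (↑(ConjAct.toConjAct g • b) : G) = g * (b : G) * g⁻¹ := by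
      rw [ConjAct.Subgroup.val_conj_smul, ConjAct.toConjAct_smul]
    rw [hb (ConjAct.toConjAct g)] at h3
    have key : g * ↑b * g⁻¹ = (b : G) := h3.symm
    calc g * (b : G) = g * ↑b * g⁻¹ * g := by simp [mul_assoc]
      _ = ↑b * g := by rw [key]
  · intro hb0
    exact hb1 (Subtype.ext hb0.symm)

variable {p : ℕ} [Fact p.Prime] {G : Type*} [Group G] [Finite G]

lemma key_card (hG : IsPGroup p G) (H : Subgroup G) (hH : H.index = p)
    (hab : (⁅H, H⁆ : Subgroup G) = ⊥) (hnab : commutator G ≠ ⊥) :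
    Subgroup.center G ≤ H ∧
      Nat.card G = p * (Nat.card (Subgroup.center G) * Nat.card (commutator G)) := by
  have hp := (Fact.out : p.Prime)
  have hcomm : ∀ a ∈ H, ∀ b ∈ H, a * b = b * a := by
    have hle := commutator_eq_bot_iff_le_centralizer.mp hab
    intro a ha b hb
    exact mem_centralizer_iff.mp (hle hb) a ha
  have hnorm : H.Normal := by
    haveI := hG.isNilpotent
    exact NormalizerCondition.normal_of_coatom H normalizerCondition_of_isNilpotent
      (coatom_of_index_prime hH)
  have hcoatom := coatom_of_index_prime (G := G) hH
  have hxex : ∃ x : G, x ∉ H := by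
    by_contra hc
    push_neg at hc
    exact hcoatom.1 ((eq_top_iff' H).mpr hc)
  obtain ⟨x, hx⟩ := hxex
  have hsup : H ⊔ zpowers x = ⊤ := by
    refine hcoatom.2 _ (lt_of_le_of_ne le_sup_left fun h => hx ?_)
    have hmem : x ∈ H ⊔ zpowers x := (le_sup_right : zpowers x ≤ _) (mem_zpowers x)
    rwa [← h] at hmem
  have hdecomp : ∀ g : G, ∃ h ∈ H, ∃ k : ℤ, g = h * x ^ k := by
    intro g
    have hg : g ∈ (↑(H ⊔ zpowers x) : Set G) := by rw [hsup]; trivial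
    rw [normal_mul] at hg
    obtain ⟨h, hh, y, hy, hhy⟩ := hg
    obtain ⟨k, hk⟩ := hy
    exact ⟨h, hh, k, by rw [← hhy, ← hk]⟩
  have hZH : Subgroup.center G ≤ H := by
    by_contra hc
    obtain ⟨z, hz, hzH⟩ := SetLike.not_le_iff_exists.mp hc
    have hsupz : H ⊔ zpowers z = ⊤ := by
      refine hcoatom.2 _ (lt_of_le_of_ne le_sup_left fun h => hzH ?_)
      have hmem : z ∈ H ⊔ zpowers z := (le_sup_right : zpowers z ≤ _) (mem_zpowers z)
      rwa [← h] at hmem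
    have hdz : ∀ g : G, ∃ h ∈ H, ∃ k : ℤ, g = h * z ^ k := by
      intro g
      have hg : g ∈ (↑(H ⊔ zpowers z) : Set G) := by rw [hsupz]; trivial
      rw [normal_mul] at hg
      obtain ⟨h, hh, y, hy, hhy⟩ := hg
      obtain ⟨k, hk⟩ := hy
      exact ⟨h, hh, k, by rw [← hhy, ← hk]⟩
    have hzc : ∀ (k : ℤ) (w : G), Commute w (z ^ k) := fun k w =>
      Subgroup.mem_center_iff.mp (zpow_mem hz k) w
    have hallcomm : ∀ a b : G, a * b = b * a := by
      intro a b
      obtain ⟨h1, hh1, k1, rfl⟩ := hdz a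
      obtain ⟨h2, hh2, k2, rfl⟩ := hdz b
      have hc12 : Commute h1 h2 := hcomm _ hh1 _ hh2
      have A1 : Commute h1 (h2 * z ^ k2) := hc12.mul_right (hzc k2 h1)
      have A2 : Commute (z ^ k1) (h2 * z ^ k2) :=
        ((hzc k1 h2).symm).mul_right ((Commute.refl z).zpow_zpow k1 k2)
      exact A1.mul_left A2
    apply hnab
    rw [show commutator G = ⁅(⊤ : Subgroup G), ⊤⁆ from rfl,
      commutator_eq_bot_iff_le_centralizer]
    intro g _
    rw [mem_centralizer_iff]
    intro h _
    exact hallcomm h g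
  -- the commutator-with-x homomorphism
  have fmem : ∀ h : G, h ∈ H → ⁅h, x⁆ ∈ H := by
    intro h hh
    have h2 : x * h⁻¹ * x⁻¹ ∈ H := hnorm.conj_mem _ (inv_mem hh) x
    have h3 : ⁅h, x⁆ = h * (x * h⁻¹ * x⁻¹) := by group
    rw [h3]; exact mul_mem hh h2
  have key_mul : ∀ u v : G, u * ⁅v, x⁆ = ⁅v, x⁆ * u → ⁅u * v, x⁆ = ⁅v, x⁆ * ⁅u, x⁆ := by
    intro u v huv
    calc ⁅u * v, x⁆ = u * ⁅v, x⁆ * (x * u⁻¹ * x⁻¹) := by group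
      _ = ⁅v, x⁆ * u * (x * u⁻¹ * x⁻¹) := by rw [huv]
      _ = ⁅v, x⁆ * ⁅u, x⁆ := by group
  let f : H →* G :=
    { toFun := fun h => ⁅(h : G), x⁆
      map_one' := by simp
      map_mul' := by
        intro a b
        show ⁅((a * b : H) : G), x⁆ = ⁅(a : G), x⁆ * ⁅(b : G), x⁆
        have h1 := key_mul (↑a) (↑b) (hcomm _ a.2 _ (fmem _ b.2))
        rw [Subgroup.coe_mul, h1, hcomm _ (fmem _ b.2) _ (fmem _ a.2)] }
  have hrangeH : ∀ g ∈ f.range, g ∈ H := by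
    rintro g ⟨h, rfl⟩
    exact fmem _ h.2
  have hxmem : x ∈ normalizer (f.range : Set G) := by
    rw [mem_normalizer_iff]
    intro n
    constructor
    · rintro ⟨h, rfl⟩
      refine ⟨⟨x * ↑h * x⁻¹, hnorm.conj_mem _ h.2 x⟩, ?_⟩
      show ⁅(x * ↑h * x⁻¹ : G), x⁆ = x * ⁅(h : G), x⁆ * x⁻¹
      rw [conjugate_commutatorElement]
      congr 1
      group
    · intro hn
      obtain ⟨h, hfh⟩ := hn
      have hmem : x⁻¹ * ↑h * x ∈ H := by
        have := hnorm.conj_mem _ h.2 x⁻¹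
        simpa using this
      refine ⟨⟨x⁻¹ * ↑h * x, hmem⟩, ?_⟩
      show ⁅(x⁻¹ * ↑h * x : G), x⁆ = n
      have hfh' : ⁅(h : G), x⁆ = x * n * x⁻¹ := hfh
      have hn' : n = x⁻¹ * ⁅(h : G), x⁆ * x := by rw [hfh']; group
      rw [hn']
      have h2 : x⁻¹ * ⁅(h : G), x⁆ * x = ⁅x⁻¹ * ↑h * x, x⁻¹ * x * x⁆ := by
        have := conjugate_commutatorElement (↑h) x x⁻¹
        simpa using this
      rw [h2]
      congr 1
      group
  have hHnormalizer : H ≤ normalizer (f.range : Set G) := by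
    intro h0 hh0
    rw [mem_normalizer_iff]
    intro n
    constructor
    · intro hn
      have hnH : n ∈ H := hrangeH _ hn
      have heq : h0 * n * h0⁻¹ = n := by rw [hcomm _ hh0 _ hnH]; group
      rwa [heq]
    · intro hn
      have hnH : h0 * n * h0⁻¹ ∈ H := hrangeH _ hn
      have hnH' : n ∈ H := by
        have := mul_mem (mul_mem (inv_mem hh0) hnH) hh0
        have heq : h0⁻¹ * (h0 * n * h0⁻¹) * h0 = n := by group
        rwa [heq] at this
      have heq : h0 * n * h0⁻¹ = n := by rw [hcomm _ hh0 _ hnH']; group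
      rwa [heq] at hn
  have hnr : f.range.Normal := by
    refine normalizer_eq_top_iff.mp (top_unique ?_)
    rw [← hsup]
    exact sup_le hHnormalizer (zpowers_le.mpr hxmem)
  haveI := hnr
  have hrange : f.range = commutator G := by
    set pi := QuotientGroup.mk' f.range with hpi
    have hpisurj : Function.Surjective pi := QuotientGroup.mk'_surjective _
    have hx' : ∀ h ∈ H, Commute (pi h) (pi x) := by
      intro h hh
      have h1 : pi ⁅h, x⁆ = 1 := (QuotientGroup.eq_one_iff _).mpr ⟨⟨h, hh⟩, rfl⟩
      rw [map_commutatorElement] at h1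
      exact commutatorElement_eq_one_iff_mul_comm.mp h1
    have hcommQ : ∀ a b : G ⧸ f.range, a * b = b * a := by
      intro a b
      obtain ⟨g1, rfl⟩ := hpisurj a
      obtain ⟨g2, rfl⟩ := hpisurj b
      obtain ⟨h1, hh1, k1, rfl⟩ := hdecomp g1
      obtain ⟨h2, hh2, k2, rfl⟩ := hdecomp g2
      rw [map_mul, map_mul, map_zpow, map_zpow]
      have c11 : Commute (pi h1) (pi h2) := by
        show pi h1 * pi h2 = pi h2 * pi h1
        rw [← map_mul, ← map_mul, hcomm _ hh1 _ hh2]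
      have A1 : Commute (pi h1) (pi h2 * (pi x) ^ k2) :=
        c11.mul_right ((hx' h1 hh1).zpow_right k2)
      have A2 : Commute ((pi x) ^ k1) (pi h2 * (pi x) ^ k2) :=
        ((hx' h2 hh2).symm.zpow_left k1).mul_right ((Commute.refl (pi x)).zpow_zpow k1 k2)
      exact A1.mul_left A2
    refine le_antisymm ?_ ?_
    · rintro g ⟨h, rfl⟩
      exact commutator_mem_commutator (mem_top _) (mem_top _)
    · rw [show commutator G = ⁅(⊤ : Subgroup G), ⊤⁆ from rfl, commutator_le]
      intro g1 _ g2 _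
      have h1 : pi ⁅g1, g2⁆ = 1 := by
        rw [map_commutatorElement]
        exact commutatorElement_eq_one_iff_mul_comm.mpr (hcommQ _ _)
      exact (QuotientGroup.eq_one_iff _).mp h1
  have hker : f.ker = (Subgroup.center G).subgroupOf H := by
    ext h
    rw [MonoidHom.mem_ker, mem_subgroupOf]
    show ⁅(h : G), x⁆ = 1 ↔ (h : G) ∈ Subgroup.center G
    rw [commutatorElement_eq_one_iff_mul_comm]
    constructor
    · intro hcx
      rw [Subgroup.mem_center_iff]
      intro g
      obtain ⟨h', hh', k, rfl⟩ := hdecomp g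
      have c1 : Commute (h : G) h' := hcomm _ h.2 _ hh'
      have c2 : Commute (h : G) (x ^ k) := Commute.zpow_right hcx k
      exact (c1.mul_right c2).eq.symm
    · intro hz
      exact (Subgroup.mem_center_iff.mp hz x).symm
  refine ⟨hZH, ?_⟩
  have h1 := Subgroup.card_eq_card_quotient_mul_card_subgroup f.ker
  have h2 : Nat.card (H ⧸ f.ker) = Nat.card f.range :=
    Nat.card_congr (QuotientGroup.quotientKerEquivRange f).toEquiv
  have h3 : Nat.card f.ker = Nat.card (Subgroup.center G) := by
    rw [hker]
    exact Nat.card_congr (subgroupOfEquivOfLe hZH).toEquiv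
  have hcards : Nat.card H = Nat.card (commutator G) * Nat.card (Subgroup.center G) := by
    rw [h1, h2, h3, hrange]
  have h4 := H.index_mul_card
  rw [hH, hcards] at h4
  rw [← h4]
  ring

end Helpers


theorem aux5 (p : ℕ) [Fact p.Prime] :
    ∀ (n : ℕ) (G : Type u) [Group G] [Finite G] (hG : IsPGroup p G),
      Nat.card G = p ^ n → 3 ≤ n → (commutator G).index = p ^ 2 →
      ∀ H : Subgroup G, H.index = p → (⁅H, H⁆ : Subgroup G) = ⊥ →
      Nat.card (Subgroup.center G) = p ∧
        Group.nilpotencyClass G = n - 1 := by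
  intro n
  induction n using Nat.strong_induction_on with
  | _ n ih =>
  intro G _ _ hG hcard hn hidx H hH hab
  have hp := (Fact.out : p.Prime)
  have hnab : commutator G ≠ ⊥ := by
    intro h
    rw [h, Subgroup.index_bot, hcard] at hidx
    have := Nat.pow_right_injective hp.two_le hidx
    omega
  obtain ⟨hZH, hcardeq⟩ := key_card hG H hH hab hnab
  have hGpos : (0 : ℕ) < Nat.card (commutator G) := Nat.card_pos
  have hidx2 : Nat.card G = p ^ 2 * Nat.card (commutator G) := by
    rw [← (commutator G).index_mul_card, hidx]
  have hZp : Nat.card (Subgroup.center G) = p := by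
    have h1 : p * (Nat.card (Subgroup.center G) * Nat.card (commutator G)) =
        p * (p * Nat.card (commutator G)) := by
      rw [← hcardeq, hidx2]; ring
    have h2 := Nat.eq_of_mul_eq_mul_left hp.pos h1
    exact Nat.eq_of_mul_eq_mul_right hGpos h2
  refine ⟨hZp, ?_⟩
  haveI hnt : Nontrivial G := by
    apply Finite.one_lt_card_iff_nontrivial.mp
    rw [hcard]
    exact Nat.one_lt_pow (by omega) hp.one_lt
  haveI := hG.isNilpotent
  have hZle : Subgroup.center G ≤ commutator G := by
    obtain ⟨z, hzN, hzZ, hz1⟩ := exists_mem_center_of_normal hG hnab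
    set z' : Subgroup.center G := ⟨z, hzZ⟩ with hz'
    have hz'1 : z' ≠ 1 := fun h => hz1 (congrArg Subtype.val h)
    have hord : orderOf z' ∣ p := by rw [← hZp]; exact orderOf_dvd_natCard z'
    have hordp : orderOf z' = p :=
      (hp.eq_one_or_self_of_dvd _ hord).resolve_left
        (by simpa [orderOf_eq_one_iff] using hz'1)
    have htop : zpowers z' = (⊤ : Subgroup (Subgroup.center G)) := by
      apply Subgroup.eq_top_of_card_eq
      rw [Nat.card_zpowers, hordp, hZp]
    intro c hc
    have hcmem : (⟨c, hc⟩ : Subgroup.center G) ∈ zpowers z' := by rw [htop]; trivial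
    obtain ⟨k, hk⟩ := hcmem
    have hck : c = z ^ k := by
      have := congrArg Subtype.val hk
      simpa [hz'] using this.symm
    rw [hck]
    exact zpow_mem hzN k
  set pi := QuotientGroup.mk' (Subgroup.center G) with hpidef
  have hpisurj := QuotientGroup.mk'_surjective (Subgroup.center G)
  have hker : pi.ker = Subgroup.center G := QuotientGroup.ker_mk' _
  have hcardQ : Nat.card (G ⧸ Subgroup.center G) = p ^ (n - 1) := by
    have h1 := Subgroup.card_eq_card_quotient_mul_card_subgroup (Subgroup.center G)
    rw [hcard, hZp] at h1
    have h2 : p ^ n = p ^ (n - 1) * p := by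
      rw [← pow_succ]; congr 1; omega
    rw [h2] at h1
    exact Nat.eq_of_mul_eq_mul_right hp.pos h1.symm
  haveI : Group.IsNilpotent (G ⧸ Subgroup.center G) := (hG.to_quotient _).isNilpotent
  have hclassQ : Group.nilpotencyClass (G ⧸ Subgroup.center G) = n - 2 := by
    rcases eq_or_lt_of_le hn with h3 | h4
    · have hc2 : Nat.card (G ⧸ Subgroup.center G) = p ^ 2 := by
        rw [hcardQ, ← h3]
      have hcm := IsPGroup.commutative_of_card_eq_prime_sq hc2
      have hcent : Subgroup.center (G ⧸ Subgroup.center G) = ⊤ := by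
        rw [eq_top_iff']
        intro q
        exact Subgroup.mem_center_iff.mpr fun g => hcm g q
      haveI hntQ : Nontrivial (G ⧸ Subgroup.center G) := by
        apply Finite.one_lt_card_iff_nontrivial.mp
        rw [hc2]
        exact Nat.one_lt_pow two_ne_zero hp.one_lt
      rw [nilpotencyClass_eq_quotient_center_plus_one]
      have hsub : Subsingleton ((G ⧸ Subgroup.center G) ⧸
          Subgroup.center (G ⧸ Subgroup.center G)) := by
        have hcard1 : Nat.card ((G ⧸ Subgroup.center G) ⧸
            Subgroup.center (G ⧸ Subgroup.center G)) = 1 := by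
          rw [← Subgroup.index_eq_card, hcent, Subgroup.index_top]
        exact (Nat.card_eq_one_iff_unique.mp hcard1).1
      haveI := hsub
      rw [nilpotencyClass_zero_iff_subsingleton.mpr hsub]
      omega
    · have h4' : 3 ≤ n - 1 := by omega
      have hltn : n - 1 < n := by omega
      have hGQ : IsPGroup p (G ⧸ Subgroup.center G) := hG.to_quotient _
      have hmaptop : Subgroup.map pi (⊤ : Subgroup G) = ⊤ := by
        rw [← MonoidHom.range_eq_map]
        exact pi.range_eq_top_of_surjective hpisurj
      have hcommQ : commutator (G ⧸ Subgroup.center G) = Subgroup.map pi (commutator G) := by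
        rw [show commutator (G ⧸ Subgroup.center G)
            = ⁅(⊤ : Subgroup (G ⧸ Subgroup.center G)), ⊤⁆ from rfl,
          show commutator G = ⁅(⊤ : Subgroup G), ⊤⁆ from rfl,
          Subgroup.map_commutator, hmaptop]
      have hidxQ : (commutator (G ⧸ Subgroup.center G)).index = p ^ 2 := by
        rw [hcommQ, Subgroup.index_map_eq _ hpisurj (by rw [hker]; exact hZle), hidx]
      have hHQidx : (Subgroup.map pi H).index = p := by
        rw [Subgroup.index_map_eq _ hpisurj (by rw [hker]; exact hZH), hH]
      have hHQab : (⁅Subgroup.map pi H, Subgroup.map pi H⁆ :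
          Subgroup (G ⧸ Subgroup.center G)) = ⊥ := by
        rw [← Subgroup.map_commutator, hab]
        exact Subgroup.map_bot _
      have hres := (ih (n - 1) hltn (G ⧸ Subgroup.center G) hGQ hcardQ h4' hidxQ
        (Subgroup.map pi H) hHQidx hHQab).2
      rw [hres]
      omega
  have hfinal := nilpotencyClass_eq_quotient_center_plus_one (G := G)
  rw [hclassQ] at hfinal
  rw [hfinal]
  omega


/-- Let `G` be a finite `p`-group with `|G| = p^n ≥ p^3` and `|G : G'| = p^2`, and let `H`
be an abelian maximal subgroup of `G`. Then `Z(G)` has order `p` and `G` is of maximal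
class, i.e. its nilpotency class is `n - 1`. -/
theorem stmt5 (p n : ℕ) [Fact p.Prime] (G : Type*) [Group G] [Finite G]
    (hG : IsPGroup p G) (hcard : Nat.card G = p ^ n) (hn : 3 ≤ n)
    (hidx : (commutator G).index = p ^ 2)
    (H : Subgroup G) (hH : H.index = p) (hab : (⁅H, H⁆ : Subgroup G) = ⊥) :
    Nat.card (Subgroup.center G) = p ∧
      Group.nilpotencyClass G = n - 1 := by
  exact aux5 p n G hG hcard hn hidx H hH hab
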